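/- Let m1, m2 divide n and define S = P(lcm(m1,m2)) − P(m1) − P(m2) + P(gcd(m1,m2)), where P(m) is the projector on ℂ^n onto span{|r(n/m)⟩ : 0 ≤ r < m}. Then S is an orthogonal projector of rank lcm(m1,m2) − m1 − m2 + gcd(m1,m2); moreover S = 0 if and only if m1 divides m2 or m2 divides m1. -/
import Mathlib


/-- For a divisor `m` of `n`, the orthogonal projector on `ℂ^n` onto the span of the
standard basis vectors whose index is a multiple of `n/m`. -/
noncomputable def proj (n m : ℕ) : Matrix (Fin n) (Fin n) ℂ :=
  Matrix.of fun i j => if i = j ∧ (n / m) ∣ (i : ℕ) then 1 else 0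

lemma proj_eq_diagonal (n m : ℕ) :
    proj n m = Matrix.diagonal (fun i : Fin n => if (n / m) ∣ (i : ℕ) then (1 : ℂ) else 0) := by
  ext i j
  by_cases h : i = j <;> simp [proj, Matrix.diagonal, h]

lemma card_filter_dvd (n d : ℕ) (hd : 0 < d) (h : d ∣ n) :
    ((Finset.range n).filter (fun i => d ∣ i)).card = n / d := by
  have himg : (Finset.range n).filter (fun i => d ∣ i)
      = (Finset.range (n / d)).image (· * d) := by
    ext i
    simp only [Finset.mem_filter, Finset.mem_range, Finset.mem_image]
    constructor
    · rintro ⟨hlt, ⟨c, rfl⟩⟩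
      exact ⟨c, by
        have : c * d < (n / d) * d := by rwa [Nat.div_mul_cancel h, mul_comm]
        exact Nat.lt_of_mul_lt_mul_right this, by ring⟩
    · rintro ⟨c, hc, rfl⟩
      constructor
      · calc c * d < (n / d) * d := (Nat.mul_lt_mul_right hd).mpr hc
          _ = n := Nat.div_mul_cancel h
      · exact Dvd.intro_left c rfl
  rw [himg, Finset.card_image_of_injective _ (fun a b hab => Nat.eq_of_mul_eq_mul_right hd hab),
    Finset.card_range]

noncomputable def chi (n k a b : ℕ) : Fin n → ℂ :=
  fun i => if k ∣ (i : ℕ) ∧ ¬ (a ∣ (i : ℕ)) ∧ ¬ (b ∣ (i : ℕ)) then 1 else 0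

/-- For divisors `m1, m2` of `n`, the operator
`S = P(lcm m1 m2) − P(m1) − P(m2) + P(gcd m1 m2)` is an orthogonal projector of rank
`lcm m1 m2 − m1 − m2 + gcd m1 m2`; moreover `S = 0` iff `m1 ∣ m2` or `m2 ∣ m1`. -/
theorem proj_disjunction_minus_superposition (n m1 m2 : ℕ) (hn : 0 < n)
    (hm1 : m1 ∣ n) (hm2 : m2 ∣ n) :
    (proj n (Nat.lcm m1 m2) - proj n m1 - proj n m2 + proj n (Nat.gcd m1 m2)) *
        (proj n (Nat.lcm m1 m2) - proj n m1 - proj n m2 + proj n (Nat.gcd m1 m2)) =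
      proj n (Nat.lcm m1 m2) - proj n m1 - proj n m2 + proj n (Nat.gcd m1 m2) ∧
    (proj n (Nat.lcm m1 m2) - proj n m1 - proj n m2 + proj n (Nat.gcd m1 m2)).IsHermitian ∧
    (proj n (Nat.lcm m1 m2) - proj n m1 - proj n m2 + proj n (Nat.gcd m1 m2)).rank
        + m1 + m2 = Nat.lcm m1 m2 + Nat.gcd m1 m2 ∧
    ((proj n (Nat.lcm m1 m2) - proj n m1 - proj n m2 + proj n (Nat.gcd m1 m2)) = 0 ↔
      m1 ∣ m2 ∨ m2 ∣ m1) := by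
  have hm1p : 0 < m1 := Nat.pos_of_dvd_of_pos hm1 hn
  have hm2p : 0 < m2 := Nat.pos_of_dvd_of_pos hm2 hn
  have hGp : 0 < Nat.gcd m1 m2 := Nat.gcd_pos_of_pos_left _ hm1p
  set c1 := m1 / Nat.gcd m1 m2 with hc1def
  set c2 := m2 / Nat.gcd m1 m2 with hc2def
  have hco : Nat.Coprime c1 c2 := Nat.coprime_div_gcd_div_gcd hGp
  have h1 : c1 * Nat.gcd m1 m2 = m1 := Nat.div_mul_cancel (Nat.gcd_dvd_left _ _)
  have h2 : c2 * Nat.gcd m1 m2 = m2 := Nat.div_mul_cancel (Nat.gcd_dvd_right _ _)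
  have hc1p : 0 < c1 := by
    rcases Nat.eq_zero_or_pos c1 with h | h
    · rw [h, zero_mul] at h1; omega
    · exact h
  have hc2p : 0 < c2 := by
    rcases Nat.eq_zero_or_pos c2 with h | h
    · rw [h, zero_mul] at h2; omega
    · exact h
  have hLdvd : Nat.lcm m1 m2 ∣ n := Nat.lcm_dvd hm1 hm2
  set k := n / Nat.lcm m1 m2 with hkdef
  have hk : Nat.lcm m1 m2 * k = n := Nat.mul_div_cancel' hLdvd
  have hLp : 0 < Nat.lcm m1 m2 := Nat.pos_of_dvd_of_pos hLdvd hn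
  have hkp : 0 < k := by
    rcases Nat.eq_zero_or_pos k with h | h
    · rw [h, mul_zero] at hk; omega
    · exact h
  have hLval : Nat.lcm m1 m2 = c1 * c2 * Nat.gcd m1 m2 := by
    apply Nat.eq_of_mul_eq_mul_right hGp
    have hgl := Nat.gcd_mul_lcm m1 m2
    calc Nat.lcm m1 m2 * Nat.gcd m1 m2 = Nat.gcd m1 m2 * Nat.lcm m1 m2 := by ring
      _ = m1 * m2 := hgl
      _ = (c1 * Nat.gcd m1 m2) * (c2 * Nat.gcd m1 m2) := by rw [h1, h2]
      _ = c1 * c2 * Nat.gcd m1 m2 * Nat.gcd m1 m2 := by ring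
  have hn_eq : n = c1 * c2 * Nat.gcd m1 m2 * k := by rw [← hk, hLval]
  have e1 : n / m1 = c2 * k := by
    have hh : n = m1 * (c2 * k) := by
      calc n = c1 * c2 * Nat.gcd m1 m2 * k := hn_eq
        _ = (c1 * Nat.gcd m1 m2) * (c2 * k) := by ring
        _ = m1 * (c2 * k) := by rw [h1]
    rw [hh, Nat.mul_div_cancel_left _ hm1p]
  have e2 : n / m2 = c1 * k := by
    have hh : n = m2 * (c1 * k) := by
      calc n = c1 * c2 * Nat.gcd m1 m2 * k := hn_eq
        _ = (c2 * Nat.gcd m1 m2) * (c1 * k) := by ring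
        _ = m2 * (c1 * k) := by rw [h2]
    rw [hh, Nat.mul_div_cancel_left _ hm2p]
  have e3 : n / Nat.lcm m1 m2 = k := rfl
  have e4 : n / Nat.gcd m1 m2 = c1 * c2 * k := by
    have hh : n = Nat.gcd m1 m2 * (c1 * c2 * k) := by rw [hn_eq]; ring
    rw [hh, Nat.mul_div_cancel_left _ hGp]
  have hS : (proj n (Nat.lcm m1 m2) - proj n m1 - proj n m2 + proj n (Nat.gcd m1 m2))
      = Matrix.diagonal (chi n k (c2 * k) (c1 * k)) := by
    rw [proj_eq_diagonal n (Nat.lcm m1 m2), proj_eq_diagonal n m1, proj_eq_diagonal n m2,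
      proj_eq_diagonal n (Nat.gcd m1 m2), e1, e2, e3, e4]
    ext i j
    rcases eq_or_ne i j with hij | hij
    swap
    · simp [Matrix.diagonal, hij, Matrix.sub_apply, Matrix.add_apply]
    subst hij
    simp only [Matrix.sub_apply, Matrix.add_apply, Matrix.diagonal_apply_eq, chi]
    by_cases hki : k ∣ (i : ℕ)
    · by_cases ha : c1 * k ∣ (i : ℕ) <;> by_cases hb : c2 * k ∣ (i : ℕ)
      · have hl : c1 * c2 * k ∣ (i : ℕ) := by
          have hj1 : c1 ∣ (i : ℕ) / k :=
            (Nat.dvd_div_iff_mul_dvd hki).mpr (by rwa [mul_comm] at ha)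
          have hj2 : c2 ∣ (i : ℕ) / k :=
            (Nat.dvd_div_iff_mul_dvd hki).mpr (by rwa [mul_comm] at hb)
          have := (Nat.dvd_div_iff_mul_dvd hki).mp (hco.mul_dvd_of_dvd_of_dvd hj1 hj2)
          rwa [show k * (c1 * c2) = c1 * c2 * k by ring] at this
        simp [hki, ha, hb, hl]
      · have hl : ¬ (c1 * c2 * k ∣ (i : ℕ)) := fun h =>
          hb (dvd_trans ⟨c1, by ring⟩ h)
        simp [hki, ha, hb, hl]
      · have hl : ¬ (c1 * c2 * k ∣ (i : ℕ)) := fun h =>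
          ha (dvd_trans ⟨c2, by ring⟩ h)
        simp [hki, ha, hb, hl]
      · have hl : ¬ (c1 * c2 * k ∣ (i : ℕ)) := fun h =>
          ha (dvd_trans ⟨c2, by ring⟩ h)
        simp [hki, ha, hb, hl]
    · have ha : ¬ (c1 * k ∣ (i : ℕ)) := fun h => hki (dvd_trans ⟨c1, by ring⟩ h)
      have hb : ¬ (c2 * k ∣ (i : ℕ)) := fun h => hki (dvd_trans ⟨c2, by ring⟩ h)
      have hl : ¬ (c1 * c2 * k ∣ (i : ℕ)) := fun h => hki (dvd_trans ⟨c1 * c2, by ring⟩ h)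
      simp [hki, ha, hb, hl]
  refine ⟨?_, ?_, ?_, ?_⟩
  · -- idempotent
    have hchi : (fun i => chi n k (c2 * k) (c1 * k) i * chi n k (c2 * k) (c1 * k) i)
        = chi n k (c2 * k) (c1 * k) := funext fun i => by
      by_cases h : k ∣ (i : ℕ) ∧ ¬ (c2 * k ∣ (i : ℕ)) ∧ ¬ (c1 * k ∣ (i : ℕ)) <;>
        simp [chi, h]
    rw [hS, Matrix.diagonal_mul_diagonal, hchi]
  · -- Hermitian
    rw [hS]
    apply Matrix.isHermitian_diagonal_of_self_adjoint
    funext i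
    by_cases h : k ∣ (i : ℕ) ∧ ¬ (c2 * k ∣ (i : ℕ)) ∧ ¬ (c1 * k ∣ (i : ℕ)) <;>
      simp [chi, h, Pi.star_apply]
  · -- rank
    rw [hS, Matrix.rank_diagonal]
    have hcard : Fintype.card {i : Fin n // chi n k (c2 * k) (c1 * k) i ≠ 0}
        = ((Finset.range n).filter
            (fun j => k ∣ j ∧ ¬ (c2 * k ∣ j) ∧ ¬ (c1 * k ∣ j))).card := by
      rw [Fintype.card_subtype]
      apply Finset.card_bij (fun (a : Fin n) _ => (a : ℕ))
      · intro a ha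
        simp only [Finset.mem_filter, Finset.mem_univ, true_and] at ha
        simp only [Finset.mem_filter, Finset.mem_range]
        refine ⟨a.isLt, ?_⟩
        by_contra hcond
        exact ha (by simp [chi, hcond])
      · intro a _ b _ hab
        exact Fin.val_injective hab
      · intro j hj
        simp only [Finset.mem_filter, Finset.mem_range] at hj
        exact ⟨⟨j, hj.1⟩, by simp [Finset.mem_filter, chi, hj.2], rfl⟩
    set A := (Finset.range n).filter (fun j => k ∣ j) with hA
    set B := (Finset.range n).filter (fun j => c2 * k ∣ j) with hB
    set C := (Finset.range n).filter (fun j => c1 * k ∣ j) with hC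
    set I := (Finset.range n).filter (fun j => c1 * c2 * k ∣ j) with hI
    have hT : (Finset.range n).filter
        (fun j => k ∣ j ∧ ¬ (c2 * k ∣ j) ∧ ¬ (c1 * k ∣ j)) = A \ (B ∪ C) := by
      ext j
      simp only [hA, hB, hC, Finset.mem_sdiff, Finset.mem_union, Finset.mem_filter,
        Finset.mem_range]
      tauto
    have hiff : ∀ j : ℕ, (c2 * k ∣ j ∧ c1 * k ∣ j) ↔ c1 * c2 * k ∣ j := by
      intro j
      constructor
      · rintro ⟨hb, ha⟩
        have hkj : k ∣ j := dvd_trans ⟨c2, by ring⟩ hb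
        have hj1 : c1 ∣ j / k := (Nat.dvd_div_iff_mul_dvd hkj).mpr (by rwa [mul_comm] at ha)
        have hj2 : c2 ∣ j / k := (Nat.dvd_div_iff_mul_dvd hkj).mpr (by rwa [mul_comm] at hb)
        have hd := (Nat.dvd_div_iff_mul_dvd hkj).mp (hco.mul_dvd_of_dvd_of_dvd hj1 hj2)
        rwa [show k * (c1 * c2) = c1 * c2 * k by ring] at hd
      · intro h
        exact ⟨dvd_trans ⟨c1, by ring⟩ h, dvd_trans ⟨c2, by ring⟩ h⟩
    have hBC : B ∩ C = I := by
      ext j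
      simp only [hB, hC, hI, Finset.mem_inter, Finset.mem_filter, Finset.mem_range]
      constructor
      · rintro ⟨⟨hj, hb⟩, ⟨-, hc⟩⟩
        exact ⟨hj, (hiff j).mp ⟨hb, hc⟩⟩
      · rintro ⟨hj, h⟩
        obtain ⟨hb, hc⟩ := (hiff j).mpr h
        exact ⟨⟨hj, hb⟩, hj, hc⟩
    have hBsub : B ∪ C ⊆ A := by
      intro j hj
      simp only [hA, hB, hC, Finset.mem_union, Finset.mem_filter, Finset.mem_range] at *
      rcases hj with ⟨hj, hd⟩ | ⟨hj, hd⟩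
      · exact ⟨hj, dvd_trans ⟨c2, by ring⟩ hd⟩
      · exact ⟨hj, dvd_trans ⟨c1, by ring⟩ hd⟩
    have hAm : A.card = Nat.lcm m1 m2 := by
      rw [hA, card_filter_dvd n k hkp ⟨c1 * c2 * Nat.gcd m1 m2, by rw [hn_eq]; ring⟩]
      have hh : n = k * Nat.lcm m1 m2 := by rw [hn_eq, hLval]; ring
      rw [hh, Nat.mul_div_cancel_left _ hkp]
    have hBm : B.card = m1 := by
      have hp : 0 < c2 * k := Nat.mul_pos hc2p hkp
      rw [hB, card_filter_dvd n (c2 * k) hp ⟨c1 * Nat.gcd m1 m2, by rw [hn_eq]; ring⟩]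
      have hh : n = (c2 * k) * m1 := by
        calc n = c1 * c2 * Nat.gcd m1 m2 * k := hn_eq
          _ = (c2 * k) * (c1 * Nat.gcd m1 m2) := by ring
          _ = (c2 * k) * m1 := by rw [h1]
      rw [hh, Nat.mul_div_cancel_left _ hp]
    have hCm : C.card = m2 := by
      have hp : 0 < c1 * k := Nat.mul_pos hc1p hkp
      rw [hC, card_filter_dvd n (c1 * k) hp ⟨c2 * Nat.gcd m1 m2, by rw [hn_eq]; ring⟩]
      have hh : n = (c1 * k) * m2 := by
        calc n = c1 * c2 * Nat.gcd m1 m2 * k := hn_eq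
          _ = (c1 * k) * (c2 * Nat.gcd m1 m2) := by ring
          _ = (c1 * k) * m2 := by rw [h2]
      rw [hh, Nat.mul_div_cancel_left _ hp]
    have hIm : I.card = Nat.gcd m1 m2 := by
      have hp : 0 < c1 * c2 * k := Nat.mul_pos (Nat.mul_pos hc1p hc2p) hkp
      rw [hI, card_filter_dvd n (c1 * c2 * k) hp ⟨Nat.gcd m1 m2, by rw [hn_eq]; ring⟩]
      have hh : n = (c1 * c2 * k) * Nat.gcd m1 m2 := by rw [hn_eq]; ring
      rw [hh, Nat.mul_div_cancel_left _ hp]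
    have h5 := Finset.card_sdiff_add_card_eq_card hBsub
    have h6 := Finset.card_union_add_card_inter B C
    rw [hBC] at h6
    rw [hcard, hT]
    calc (A \ (B ∪ C)).card + m1 + m2
        = (A \ (B ∪ C)).card + B.card + C.card := by rw [hBm, hCm]
      _ = A.card + I.card := by omega
      _ = Nat.lcm m1 m2 + Nat.gcd m1 m2 := by rw [hAm, hIm]
  · -- zero iff
    constructor
    · intro h0
      by_contra hcon
      push_neg at hcon
      obtain ⟨hn1, hn2⟩ := hcon
      have hc1ne : c1 ≠ 1 := by
        intro h
        apply hn1
        rw [← h1, h, one_mul]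
        exact Nat.gcd_dvd_right m1 m2
      have hc2ne : c2 ≠ 1 := by
        intro h
        apply hn2
        rw [← h2, h, one_mul]
        exact Nat.gcd_dvd_left m1 m2
      have hc1two : 2 ≤ c1 := by omega
      have hc2two : 2 ≤ c2 := by omega
      have h8 : c1 * 1 * 1 ≤ c1 * c2 * Nat.gcd m1 m2 :=
        Nat.mul_le_mul (Nat.mul_le_mul le_rfl hc2p) hGp
      rw [mul_one, mul_one] at h8
      have hklt : k < n := by
        rw [hn_eq]
        calc k < 2 * k := by omega
          _ ≤ c1 * c2 * Nat.gcd m1 m2 * k := Nat.mul_le_mul_right k (by omega)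
      have hz : Matrix.diagonal (chi n k (c2 * k) (c1 * k)) ⟨k, hklt⟩ ⟨k, hklt⟩ = (0 : ℂ) := by
        rw [← hS, h0, Matrix.zero_apply]
      have hcond : k ∣ k ∧ ¬ (c2 * k ∣ k) ∧ ¬ (c1 * k ∣ k) := by
        refine ⟨dvd_rfl, ?_, ?_⟩
        · intro h
          have h9 := Nat.le_of_dvd hkp h
          have h10 : 2 * k ≤ c2 * k := Nat.mul_le_mul_right k hc2two
          omega
        · intro h
          have h9 := Nat.le_of_dvd hkp h
          have h10 : 2 * k ≤ c1 * k := Nat.mul_le_mul_right k hc1two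
          omega
      rw [Matrix.diagonal_apply_eq] at hz
      simp [chi, hcond] at hz
    · intro h
      have hzero : chi n k (c2 * k) (c1 * k) = 0 := by
        funext i
        rcases h with h | h
        · have hgm : Nat.gcd m1 m2 = m1 :=
            Nat.dvd_antisymm (Nat.gcd_dvd_left _ _) (Nat.dvd_gcd dvd_rfl h)
          have hc1 : c1 = 1 := by
            have h1' := h1
            rw [hgm] at h1'
            have h1'' : c1 * m1 = 1 * m1 := by rw [one_mul]; exact h1'
            exact Nat.eq_of_mul_eq_mul_right hm1p h1''
          simp only [chi, Pi.zero_apply]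
          rw [if_neg]
          rintro ⟨hki, -, hai⟩
          exact hai (by rwa [hc1, one_mul])
        · have hgm : Nat.gcd m1 m2 = m2 :=
            Nat.dvd_antisymm (Nat.gcd_dvd_right _ _) (Nat.dvd_gcd h dvd_rfl)
          have hc2 : c2 = 1 := by
            have h2' := h2
            rw [hgm] at h2'
            have h2'' : c2 * m2 = 1 * m2 := by rw [one_mul]; exact h2'
            exact Nat.eq_of_mul_eq_mul_right hm2p h2''
          simp only [chi, Pi.zero_apply]
          rw [if_neg]
          rintro ⟨hki, hbi, -⟩
          exact hbi (by rwa [hc2, one_mul])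
      rw [hS, hzero]
      exact Matrix.diagonal_zero
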